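/- arXiv:2403.04907 — 3 statements merged into one kernel-verified Lean document; each statement's English description precedes it below -/
import Mathlib

section
/- Let γ : Ω → (0,∞) and c : Ω → [0,∞) be random variables with c ∈ L^{p}(Ω,𝓕,ℙ) for some p > 0, and assume the decay condition: there exist a₀ > 0 and E_ω ≥ 1 with E ∈ L^{q₀}(Ω,𝓕,ℙ) such that for ℙ-a.e. ω and all n ≥ 1: max( Π_{j=0}^{n−1} γ_{σ^{j}ω}^{−1}, Π_{j=1}^{n−1} γ_{σ^{−j}ω}^{−1} ) ≤ E_ω·n^{−a₀}. If a₀ > 1/p + 1, then there exist a constant C > 0 and a random variable R ∈ L^{p}(Ω,𝓕,ℙ) such that for ℙ-a.e. ω ∈ Ω the following holds: for every n ≥ 1 and all C² real functions z₁,…,z_n defined on intervals, with nonvanishing first derivatives and such that the composition y = z_n ∘ z_{n−1} ∘ ⋯ ∘ z₁ is defined on a nondegenerate interval, if |z_j′| ≤ γ_{σ^{−j}ω}^{−1} and |z_j″| ≤ c(σ^{−j}ω)·|z_j′| pointwise for each 1 ≤ j ≤ n, then sup |y″/y′| ≤ Σ_{k=1}^{n} c(σ^{−k}ω)·Π_{j=1}^{k−1}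 γ_{σ^{−j}ω}^{−1} ≤ C·R(ω)·E_ω. -/
open MeasureTheory Function

noncomputable section

/-- `C ∈ L^p(Ω,𝓕,ℙ)` for a nonnegative random variable `C`. -/
def MemLpRV {Ω : Type*} [MeasurableSpace Ω] (ℙ : Measure Ω) (p : ℝ) (C : Ω → ℝ) : Prop :=
  Measurable C ∧ (∀ ω, 0 ≤ C ω) ∧ Integrable (fun ω => C ω ^ p) ℙ

/-- The `C^r` norm of a (1-periodic) function on `ℝ`:
`max_{0 ≤ i ≤ r} sup_x |f^{(i)}(x)|`. -/
def crNorm (r : ℕ) (f : ℝ → ℝ) : ℝ :=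
  ⨆ p : Fin (r + 1) × ℝ, |iteratedDeriv (p.1 : ℕ) f p.2|

/-- The transfer operator (with respect to Lebesgue/Haar measure) of the circle map
induced by the lift `T : ℝ → ℝ`, acting on (1-periodic) functions:
`L g (x) = Σ_{y : T y = x} g(y)/|T'(y)|`, the sum running over the preimages of `x`
in a fundamental domain `[0,1)`. -/
def transferOp (T : ℝ → ℝ) (g : ℝ → ℝ) (x : ℝ) : ℝ :=
  ∑' y : {y : ℝ // y ∈ Set.Ico (0 : ℝ) 1 ∧ ∃ k : ℤ, T y = x + k}, g (y : ℝ) / |deriv T (y : ℝ)|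

/-- Iterates of maps along an orbit of `σ`: `T^n_ω = T_{σ^{n-1}ω} ∘ ⋯ ∘ T_ω`. -/
def mapIter {Ω : Type*} (σ : Ω → Ω) (T : Ω → ℝ → ℝ) : ℕ → Ω → ℝ → ℝ
  | 0, _, x => x
  | n + 1, ω, x => mapIter σ T n (σ ω) (T ω x)

/-- Iterates of the transfer operators along an orbit of `σ`:
`L^n_ω = L_{σ^{n-1}ω} ∘ ⋯ ∘ L_ω`. -/
def transferIter {Ω : Type*} (σ : Ω → Ω) (T : Ω → ℝ → ℝ) : ℕ → Ω → (ℝ → ℝ) → ℝ → ℝ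
  | 0, _, g => g
  | n + 1, ω, g => transferIter σ T n (σ ω) (transferOp (T ω) g)

/-- The composition `z_n ∘ z_{n-1} ∘ ⋯ ∘ z_1` (the empty composition is the identity). -/
def compSeq (z : ℕ → ℝ → ℝ) : ℕ → ℝ → ℝ
  | 0, x => x
  | n + 1, x => z (n + 1) (compSeq z n x)

/-- Birkhoff sums `S_n φ (x) = Σ_{j<n} φ_{σ^j ω}(T^j_ω x)` along an orbit of `σ`. -/
def birkSum {Ω : Type*} (σ : Ω → Ω) (T : Ω → ℝ → ℝ) (φ : Ω → ℝ → ℝ) (n : ℕ) (ω : Ω)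
    (x : ℝ) : ℝ :=
  ∑ j ∈ Finset.range n, φ (σ^[j] ω) (mapIter σ T j ω x)

/-- Integral over the circle (one period). -/
def circInt (g : ℝ → ℝ) : ℝ := ∫ x in Set.Ioc (0 : ℝ) 1, g x


open scoped ENNReal

lemma aux_contDiff (n : ℕ) (z : ℕ → ℝ → ℝ)
    (h1 : ∀ j, 1 ≤ j → j ≤ n → ContDiff ℝ 2 (z j)) :
    ∀ m, m ≤ n → ContDiff ℝ 2 (compSeq z m) := by
  intro m
  induction m with
  | zero => intro _; exact contDiff_id
  | succ m ih =>
    intro hm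
    exact (h1 (m+1) (by omega) hm).comp (ih (by omega))

lemma aux_deriv_comp (n : ℕ) (z : ℕ → ℝ → ℝ)
    (h1 : ∀ j, 1 ≤ j → j ≤ n → ContDiff ℝ 2 (z j)) (m : ℕ) (hm : m + 1 ≤ n) (x : ℝ) :
    deriv (compSeq z (m+1)) x
      = deriv (z (m+1)) (compSeq z m x) * deriv (compSeq z m) x := by
  have hz : DifferentiableAt ℝ (z (m+1)) (compSeq z m x) :=
    ((h1 (m+1) (by omega) hm).differentiable (by norm_num)).differentiableAt
  have hy : DifferentiableAt ℝ (compSeq z m) x :=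
    ((aux_contDiff n z h1 m (by omega)).differentiable (by norm_num)).differentiableAt
  exact deriv_comp x hz hy

lemma deriv_of_contDiff2 {f : ℝ → ℝ} (h : ContDiff ℝ 2 f) : Differentiable ℝ (deriv f) := by
  have h' : ContDiff ℝ (1+1 : ℕ) f := by norm_num; exact h
  exact (((contDiff_succ_iff_deriv (n := 1)).mp (by exact_mod_cast h')).2.2).differentiable (by norm_num)

lemma aux_deriv2_comp (n : ℕ) (z : ℕ → ℝ → ℝ)
    (h1 : ∀ j, 1 ≤ j → j ≤ n → ContDiff ℝ 2 (z j)) (m : ℕ) (hm : m + 1 ≤ n) (x : ℝ) :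
    deriv (deriv (compSeq z (m+1))) x
      = (deriv (deriv (z (m+1))) (compSeq z m x) * deriv (compSeq z m) x)
          * deriv (compSeq z m) x
        + deriv (z (m+1)) (compSeq z m x) * deriv (deriv (compSeq z m)) x := by
  have hzC : ContDiff ℝ 2 (z (m+1)) := h1 (m+1) (by omega) hm
  have hyC : ContDiff ℝ 2 (compSeq z m) := aux_contDiff n z h1 m (by omega)
  have hy : DifferentiableAt ℝ (compSeq z m) x :=
    (hyC.differentiable (by norm_num)).differentiableAt
  have hdz : Differentiable ℝ (deriv (z (m+1))) := deriv_of_contDiff2 hzC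
  have hdy : Differentiable ℝ (deriv (compSeq z m)) := deriv_of_contDiff2 hyC
  have hder : deriv (compSeq z (m+1))
      = fun y => deriv (z (m+1)) (compSeq z m y) * deriv (compSeq z m) y :=
    funext fun y => aux_deriv_comp n z h1 m hm y
  rw [hder]
  have hfa : DifferentiableAt ℝ (fun y => deriv (z (m+1)) (compSeq z m y)) x :=
    (hdz.differentiableAt).comp x hy
  rw [deriv_fun_mul hfa (hdy.differentiableAt)]
  have hcomp : deriv (fun y => deriv (z (m+1)) (compSeq z m y)) x
      = deriv (deriv (z (m+1))) (compSeq z m x) * deriv (compSeq z m) x :=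
    deriv_comp x (hdz.differentiableAt) hy
  rw [hcomp]

lemma aux_calc (n : ℕ) (z : ℕ → ℝ → ℝ) (s : Set ℝ) (g cc : ℕ → ℝ)
    (hg : ∀ j, 0 ≤ g j) (hcc : ∀ j, 0 ≤ cc j)
    (h1 : ∀ j, 1 ≤ j → j ≤ n → ContDiff ℝ 2 (z j))
    (h2 : ∀ j, 1 ≤ j → j ≤ n → ∀ x ∈ s,
      deriv (z j) (compSeq z (j - 1) x) ≠ 0 ∧
      |deriv (z j) (compSeq z (j - 1) x)| ≤ g j ∧
      |deriv (deriv (z j)) (compSeq z (j - 1) x)| ≤ cc j * |deriv (z j) (compSeq z (j - 1) x)|) :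
    ∀ m, m ≤ n → ∀ x ∈ s,
      deriv (compSeq z m) x ≠ 0 ∧
      |deriv (compSeq z m) x| ≤ ∏ j ∈ Finset.Icc 1 m, g j ∧
      |deriv (deriv (compSeq z m)) x|
        ≤ (∑ k ∈ Finset.Icc 1 m, cc k * ∏ j ∈ Finset.Ico 1 k, g j)
            * |deriv (compSeq z m) x| := by
  intro m
  induction m with
  | zero =>
    intro _ x _
    have e0 : compSeq z 0 = fun x : ℝ => x := rfl
    have d1 : deriv (compSeq z 0) = fun _ : ℝ => (1:ℝ) := by
      rw [e0]; ext y; simp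
    refine ⟨by rw [d1]; norm_num, ?_, ?_⟩
    · rw [d1]; simp
    · rw [d1]; simp
  | succ m ih =>
    intro hm x hx
    have hmn : m ≤ n := by omega
    obtain ⟨ihne, ihle, ihcc⟩ := ih hmn x hx
    obtain ⟨hne, hle, hcc2⟩ := h2 (m+1) (by omega) hm x hx
    simp only [Nat.add_sub_cancel] at hne hle hcc2
    set u := compSeq z m x with hu
    set a := deriv (z (m+1)) u with ha
    set D := deriv (compSeq z m) x with hD
    set D2 := deriv (deriv (compSeq z m)) x with hD2
    set a2 := deriv (deriv (z (m+1))) u with ha2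
    set Pm := ∏ j ∈ Finset.Icc 1 m, g j with hPm
    set Bm := ∑ k ∈ Finset.Icc 1 m, cc k * ∏ j ∈ Finset.Ico 1 k, g j with hBm
    have hPm0 : 0 ≤ Pm := Finset.prod_nonneg fun j _ => hg j
    have hd1 : deriv (compSeq z (m+1)) x = a * D := aux_deriv_comp n z h1 m hm x
    have hd2 : deriv (deriv (compSeq z (m+1))) x = (a2 * D) * D + a * D2 :=
      aux_deriv2_comp n z h1 m hm x
    have hprod : ∏ j ∈ Finset.Icc 1 (m+1), g j = Pm * g (m+1) :=
      Finset.prod_Icc_succ_top (by omega) g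
    have hico : ∏ j ∈ Finset.Ico 1 (m+1), g j = Pm := by
      rw [Finset.Ico_add_one_right_eq_Icc]
    have hsum : ∑ k ∈ Finset.Icc 1 (m+1), cc k * ∏ j ∈ Finset.Ico 1 k, g j
        = Bm + cc (m+1) * Pm := by
      rw [Finset.sum_Icc_succ_top (by omega), hico]
    refine ⟨by rw [hd1]; exact mul_ne_zero hne ihne, ?_, ?_⟩
    · rw [hd1, hprod, abs_mul]
      calc |a| * |D| ≤ g (m+1) * Pm :=
            mul_le_mul hle ihle (abs_nonneg _) (hg _)
        _ = Pm * g (m+1) := mul_comm _ _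
    · rw [hd1, hd2, hsum]
      have habs : |(a2 * D) * D + a * D2| ≤ |a2| * |D| * |D| + |a| * |D2| := by
        calc |(a2 * D) * D + a * D2| ≤ |(a2 * D) * D| + |a * D2| := abs_add_le _ _
          _ = |a2| * |D| * |D| + |a| * |D2| := by rw [abs_mul, abs_mul, abs_mul]
      have h3 : |a2| * |D| * |D| + |a| * |D2|
          ≤ (cc (m+1) * |a|) * |D| * |D| + |a| * (Bm * |D|) := by
        have t1 : |a2| * |D| * |D| ≤ (cc (m+1) * |a|) * |D| * |D| := by
          have := mul_le_mul_of_nonneg_right (mul_le_mul_of_nonneg_right hcc2 (abs_nonneg D))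
            (abs_nonneg D)
          exact this
        have t2 : |a| * |D2| ≤ |a| * (Bm * |D|) :=
          mul_le_mul_of_nonneg_left ihcc (abs_nonneg a)
        linarith
      have h4 : (cc (m+1) * |a|) * |D| * |D| + |a| * (Bm * |D|)
          = (|a| * |D|) * (cc (m+1) * |D| + Bm) := by ring
      have h5 : (|a| * |D|) * (cc (m+1) * |D| + Bm)
          ≤ (|a| * |D|) * (cc (m+1) * Pm + Bm) := by
        apply mul_le_mul_of_nonneg_left _ (by positivity)
        have := mul_le_mul_of_nonneg_left ihle (hcc (m+1))
        linarith
      calc |(a2 * D) * D + a * D2| ≤ |a2| * |D| * |D| + |a| * |D2| := habs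
        _ ≤ (cc (m+1) * |a|) * |D| * |D| + |a| * (Bm * |D|) := h3
        _ = (|a| * |D|) * (cc (m+1) * |D| + Bm) := h4
        _ ≤ (|a| * |D|) * (cc (m+1) * Pm + Bm) := h5
        _ = (Bm + cc (m+1) * Pm) * |a * D| := by rw [abs_mul]; ring

theorem stmt_7
    {Ω : Type*} [MeasurableSpace Ω] (ℙ : Measure Ω) [IsProbabilityMeasure ℙ]
    (σ σinv : Ω → Ω)
    (hσ : MeasurePreserving σ ℙ ℙ) (hσinv : Measurable σinv)
    (hinv₁ : Function.LeftInverse σinv σ) (hinv₂ : Function.RightInverse σinv σ)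
    (γ : Ω → ℝ) (hγ : ∀ ω, 0 < γ ω)
    (c : Ω → ℝ) (p : ℝ) (hp : 0 < p) (hc : MemLpRV ℙ p c)
    -- the decay condition
    (a₀ q₀ : ℝ) (ha₀pos : 0 < a₀) (hq₀ : 0 < q₀)
    (E : Ω → ℝ) (hE1 : ∀ ω, 1 ≤ E ω) (hE : MemLpRV ℙ q₀ E)
    (hdecay : ∀ᵐ ω ∂ℙ, ∀ n : ℕ, 1 ≤ n →
      max (∏ j ∈ Finset.range n, (γ (σ^[j] ω))⁻¹)
          (∏ j ∈ Finset.Ico 1 n, (γ (σinv^[j] ω))⁻¹) ≤ E ω * (n : ℝ) ^ (-a₀))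
    (ha₀ : 1 / p + 1 < a₀) :
    ∃ C : ℝ, 0 < C ∧
      ∃ R : Ω → ℝ, MemLpRV ℙ p R ∧
        ∀ᵐ ω ∂ℙ, ∀ n : ℕ, 1 ≤ n → ∀ z : ℕ → ℝ → ℝ, ∀ s : Set ℝ,
          (∀ j, 1 ≤ j → j ≤ n → ContDiff ℝ 2 (z j)) →
          (∀ j, 1 ≤ j → j ≤ n → ∀ x ∈ s,
            deriv (z j) (compSeq z (j - 1) x) ≠ 0 ∧
            |deriv (z j) (compSeq z (j - 1) x)| ≤ (γ (σinv^[j] ω))⁻¹ ∧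
            |deriv (deriv (z j)) (compSeq z (j - 1) x)| ≤
              c (σinv^[j] ω) * |deriv (z j) (compSeq z (j - 1) x)|) →
          (∀ x ∈ s,
              |deriv (deriv (compSeq z n)) x / deriv (compSeq z n) x| ≤
                ∑ k ∈ Finset.Icc 1 n,
                  c (σinv^[k] ω) * ∏ j ∈ Finset.Ico 1 k, (γ (σinv^[j] ω))⁻¹) ∧
            (∑ k ∈ Finset.Icc 1 n,
                c (σinv^[k] ω) * ∏ j ∈ Finset.Ico 1 k, (γ (σinv^[j] ω))⁻¹) ≤
              C * R ω * E ω := by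
  classical
  have hσinvmp : MeasurePreserving σinv ℙ ℙ := by
    let e : Ω ≃ᵐ Ω := ⟨Equiv.mk σ σinv hinv₁ hinv₂, hσ.measurable, hσinv⟩
    exact MeasurePreserving.symm e hσ
  set δ : ℝ := (a₀ - 1 - 1/p) / 2 with hδdef
  have hδ : 0 < δ := by rw [hδdef]; linarith
  have hδp : 0 < δ * p := mul_pos hδ hp
  have hb1 : (1:ℝ) < 1 + δ * p := by linarith
  have h1δ : (1:ℝ) < 1 + δ := by linarith
  have hsummb : Summable (fun k : ℕ => ((k:ℝ)+1) ^ (-(1 + δ * p))) := by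
    have h0 : Summable (fun m : ℕ => (m : ℝ) ^ (-(1 + δ * p))) :=
      Real.summable_nat_rpow.2 (by linarith)
    have h2 := (summable_nat_add_iff 1).2 h0
    simpa [Nat.cast_add, Nat.cast_one] using h2
  have hsumδ : Summable (fun k : ℕ => ((k:ℝ)+1) ^ (-(1 + δ))) := by
    have h0 : Summable (fun m : ℕ => (m : ℝ) ^ (-(1 + δ))) :=
      Real.summable_nat_rpow.2 (by linarith)
    have h2 := (summable_nat_add_iff 1).2 h0
    simpa [Nat.cast_add, Nat.cast_one] using h2
  set G : Ω → ℝ≥0∞ := fun ω => ∑' k : ℕ,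
      ENNReal.ofReal (c ((σinv)^[k+1] ω) ^ p)
        * ENNReal.ofReal (((k:ℝ)+1) ^ (-(1 + δ * p))) with hGdef
  have hmeas : ∀ k : ℕ, Measurable fun ω =>
      ENNReal.ofReal (c ((σinv)^[k+1] ω) ^ p)
        * ENNReal.ofReal (((k:ℝ)+1) ^ (-(1 + δ * p))) := by
    intro k
    exact ((hc.1.comp (hσinv.iterate (k+1))).pow_const p).ennreal_ofReal.mul_const _
  have hGmeas : Measurable G := Measurable.ennreal_tsum hmeas
  have hGint : ∫⁻ ω, G ω ∂ℙ ≠ ∞ := by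
    rw [hGdef]
    rw [lintegral_tsum (fun k => (hmeas k).aemeasurable)]
    have hterm : ∀ k : ℕ, ∫⁻ ω, ENNReal.ofReal (c ((σinv)^[k+1] ω) ^ p)
        * ENNReal.ofReal (((k:ℝ)+1) ^ (-(1 + δ * p))) ∂ℙ
        = (∫⁻ ω, ENNReal.ofReal (c ω ^ p) ∂ℙ)
            * ENNReal.ofReal (((k:ℝ)+1) ^ (-(1 + δ * p))) := by
      intro k
      have hm1 : Measurable fun ω => ENNReal.ofReal (c ((σinv)^[k+1] ω) ^ p) :=
        ((hc.1.comp (hσinv.iterate (k+1))).pow_const p).ennreal_ofReal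
      rw [lintegral_mul_const _ hm1]
      congr 1
      exact (hσinvmp.iterate (k+1)).lintegral_comp ((hc.1.pow_const p).ennreal_ofReal)
    simp only [hterm]
    rw [ENNReal.tsum_mul_left]
    apply ENNReal.mul_ne_top
    · exact hc.2.2.lintegral_lt_top.ne
    · rw [← ENNReal.ofReal_tsum_of_nonneg (fun k => Real.rpow_nonneg (by positivity) _) hsummb]
      exact ENNReal.ofReal_ne_top
  set R : Ω → ℝ := fun ω => (G ω).toReal ^ (p⁻¹) with hRdef
  have hRnn : ∀ ω, 0 ≤ R ω := fun ω => Real.rpow_nonneg ENNReal.toReal_nonneg _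
  have hRp : ∀ ω, R ω ^ p = (G ω).toReal := by
    intro ω
    rw [hRdef]
    rw [← Real.rpow_mul ENNReal.toReal_nonneg, inv_mul_cancel₀ hp.ne', Real.rpow_one]
  have hRint : Integrable (fun ω => R ω ^ p) ℙ := by
    simp only [hRp]
    exact integrable_toReal_of_lintegral_ne_top hGmeas.aemeasurable hGint
  set C : ℝ := ∑' k : ℕ, ((k:ℝ)+1) ^ (-(1 + δ)) with hCdef
  have hCpos : 0 < C := by
    have h0 : (1:ℝ) ≤ C := by
      have h1 := hsumδ.le_tsum 0 (fun j _ => Real.rpow_nonneg (by positivity) _)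
      have h2 : ((0:ℕ):ℝ) + 1 = 1 := by norm_num
      rw [h2, Real.one_rpow] at h1
      exact h1
    linarith
  refine ⟨C, hCpos, R, ⟨(hGmeas.ennreal_toReal).pow_const _, hRnn, hRint⟩, ?_⟩
  filter_upwards [hdecay, ae_lt_top hGmeas hGint] with ω hdec hGfin
  intro n hn z s h1 h2
  constructor
  · intro x hx
    obtain ⟨hne, -, hd2⟩ := aux_calc n z s (fun j => (γ ((σinv)^[j] ω))⁻¹)
      (fun j => c ((σinv)^[j] ω))
      (fun j => inv_nonneg.2 (hγ _).le) (fun j => hc.2.1 _) h1 h2 n le_rfl x hx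
    rw [abs_div, div_le_iff₀ (abs_pos.mpr hne)]
    exact hd2
  · have key : ∀ k : ℕ, 1 ≤ k →
        c ((σinv)^[k] ω) * ∏ j ∈ Finset.Ico 1 k, (γ ((σinv)^[j] ω))⁻¹
          ≤ E ω * (R ω * ((k:ℝ)) ^ (-(1+δ))) := by
      intro k hk
      have hkpos : (0:ℝ) < (k:ℝ) := by exact_mod_cast hk
      have hprod : ∏ j ∈ Finset.Ico 1 k, (γ ((σinv)^[j] ω))⁻¹ ≤ E ω * (k:ℝ) ^ (-a₀) :=
        le_trans (le_max_right _ _) (hdec k hk)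
      have hck : 0 ≤ c ((σinv)^[k] ω) := hc.2.1 _
      have hsplit : ((k:ℝ)) ^ (-a₀) = (k:ℝ) ^ (-(1/p + δ)) * (k:ℝ) ^ (-(1+δ)) := by
        rw [← Real.rpow_add hkpos]
        congr 1
        rw [hδdef]; ring
      have hmain : c ((σinv)^[k] ω) * (k:ℝ) ^ (-(1/p + δ)) ≤ R ω := by
        rw [← Real.rpow_le_rpow_iff (by positivity) (hRnn ω) hp, hRp]
        have hexp : (c ((σinv)^[k] ω) * (k:ℝ) ^ (-(1/p + δ))) ^ p
            = c ((σinv)^[k] ω) ^ p * (k:ℝ) ^ (-(1 + δ * p)) := by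
          rw [Real.mul_rpow hck (Real.rpow_nonneg hkpos.le _),
            ← Real.rpow_mul hkpos.le]
          have h9 : (1/p + δ) * p = 1 + δ * p := by
            rw [add_mul, one_div, inv_mul_cancel₀ hp.ne']
          congr 2
          rw [neg_mul, h9]
        rw [hexp]
        obtain ⟨m, rfl⟩ : ∃ m, k = m + 1 := ⟨k - 1, by omega⟩
        have hterm : ENNReal.ofReal (c ((σinv)^[m+1] ω) ^ p)
            * ENNReal.ofReal (((m:ℝ)+1) ^ (-(1+δ*p))) ≤ G ω := by
          rw [hGdef]
          exact ENNReal.le_tsum m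
        have hterm' := ENNReal.toReal_mono hGfin.ne hterm
        rw [ENNReal.toReal_mul, ENNReal.toReal_ofReal (by positivity),
          ENNReal.toReal_ofReal (Real.rpow_nonneg (by positivity) _)] at hterm'
        have hcast : ((m+1 : ℕ):ℝ) = (m:ℝ)+1 := by push_cast; ring
        rw [hcast]
        exact hterm'
      calc c ((σinv)^[k] ω) * ∏ j ∈ Finset.Ico 1 k, (γ ((σinv)^[j] ω))⁻¹
          ≤ c ((σinv)^[k] ω) * (E ω * (k:ℝ) ^ (-a₀)) :=
            mul_le_mul_of_nonneg_left hprod hck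
        _ = E ω * ((c ((σinv)^[k] ω) * (k:ℝ) ^ (-(1/p + δ))) * (k:ℝ) ^ (-(1+δ))) := by
            rw [hsplit]; ring
        _ ≤ E ω * (R ω * ((k:ℝ)) ^ (-(1+δ))) := by
            apply mul_le_mul_of_nonneg_left _ (le_trans zero_le_one (hE1 ω))
            exact mul_le_mul_of_nonneg_right hmain (Real.rpow_nonneg hkpos.le _)
    calc ∑ k ∈ Finset.Icc 1 n, c ((σinv)^[k] ω) * ∏ j ∈ Finset.Ico 1 k, (γ ((σinv)^[j] ω))⁻¹
        ≤ ∑ k ∈ Finset.Icc 1 n, E ω * (R ω * ((k:ℝ)) ^ (-(1+δ))) :=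
          Finset.sum_le_sum (fun k hk => key k (Finset.mem_Icc.mp hk).1)
      _ = (E ω * R ω) * ∑ k ∈ Finset.Icc 1 n, ((k:ℝ)) ^ (-(1+δ)) := by
          rw [Finset.mul_sum]
          exact Finset.sum_congr rfl (fun k _ => by ring)
      _ ≤ (E ω * R ω) * C := by
          apply mul_le_mul_of_nonneg_left _
            (mul_nonneg (le_trans zero_le_one (hE1 ω)) (hRnn ω))
          rw [← Finset.Ico_add_one_right_eq_Icc, Finset.sum_Ico_eq_sum_range]
          simp only [Nat.add_sub_cancel, Nat.succ_sub_one]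
          have hcg : ∀ i ∈ Finset.range n, ((1+i : ℕ):ℝ) ^ (-(1+δ)) = ((i:ℝ)+1) ^ (-(1+δ)) := by
            intro i _
            congr 1
            push_cast
            ring
          rw [Finset.sum_congr rfl hcg]
          exact hsumδ.sum_le_tsum _ (fun i _ => Real.rpow_nonneg (by positivity) _)
      _ = C * R ω * E ω := by ring
end
end

section
/- For each ε ∈ I and ω ∈ Ω let L_{ω,ε} be a bounded linear operator on C⁰(𝕋), and let (h_{ω,ε})_{ω∈Ω} ⊆ C⁰(𝕋) be families of functions. Assume there are β > 1 and C₁ ∈ L^{p₁}(Ω,𝓕,ℙ) with p₁ ≥ 1 such that for ℙ-a.e. ω, every ε ∈ I, every n ≥ 1 and every g ∈ C¹(𝕋): ‖L^{n}_{ω,ε} g − (∫ g dm)·h_{σ^{n}ω,ε}‖_∞ ≤ C₁(ω)·n^{−β}·‖g‖_{C¹}, and assume there is a finite random variable E with ‖L_{ω,ε}𝟙‖_∞ ≤ E(ω) for ℙ-a.e. ω and all ε ∈ I. Then there exists a random variable B₀ ∈ L^{p₁}(Ω,𝓕,ℙ) such that for ℙ-a.e. ω, all n ≥ 1 and all ε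 ∈ I: ‖L^{n}_{σ^{−n}ω,ε}𝟙‖_∞ ≤ B₀(ω) + E(σ^{−1}ω), and in particular ‖h_{ω,ε}‖_∞ ≤ B₀(ω) + E(σ^{−1}ω). -/
open MeasureTheory Function
open scoped ENNReal NNReal

noncomputable section

/-- Iterates of linear operators on functions along an orbit of `σ`:
`L^n_ω = L_{σ^{n-1}ω} ∘ ⋯ ∘ L_ω`. -/
def iterLin {Ω : Type*} (σ : Ω → Ω) (L : Ω → (ℝ → ℝ) →ₗ[ℝ] (ℝ → ℝ)) :
    ℕ → Ω → (ℝ → ℝ) →ₗ[ℝ] (ℝ → ℝ)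
  | 0, _ => LinearMap.id
  | n + 1, ω => (iterLin σ L n (σ ω)).comp (L ω)

/-! ### Auxiliary lemmas -/

lemma crNorm_nonneg (r : ℕ) (f : ℝ → ℝ) : 0 ≤ crNorm r f :=
  Real.iSup_nonneg fun _ => abs_nonneg _

lemma crNorm_zero_le {f : ℝ → ℝ} {a : ℝ} (ha : 0 ≤ a) (hf : ∀ x, |f x| ≤ a) :
    crNorm 0 f ≤ a := by
  refine Real.iSup_le (fun p => ?_) ha
  have h0 : (p.1 : ℕ) = 0 := Nat.lt_one_iff.mp p.1.isLt
  rw [h0, iteratedDeriv_zero]; exact hf p.2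

lemma abs_le_crNorm_zero {f : ℝ → ℝ} (hc : Continuous f) (hp : Periodic f 1) (x : ℝ) :
    |f x| ≤ crNorm 0 f := by
  obtain ⟨M, hM⟩ : ∃ M, ∀ y, |f y| ≤ M := by
    obtain ⟨M, hM⟩ :=
      (isCompact_Icc (a := (0:ℝ)) (b := 1)).exists_bound_of_continuousOn hc.continuousOn
    refine ⟨M, fun y => ?_⟩
    obtain ⟨z, hz, hyz⟩ := hp.exists_mem_Ico₀ one_pos y
    rw [hyz, ← Real.norm_eq_abs]
    exact hM z ⟨hz.1, hz.2.le⟩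
  have hb : BddAbove (Set.range fun p : Fin (0 + 1) × ℝ => |iteratedDeriv (p.1 : ℕ) f p.2|) := by
    refine ⟨M, ?_⟩
    rintro y ⟨p, rfl⟩
    have h0 : (p.1 : ℕ) = 0 := Nat.lt_one_iff.mp p.1.isLt
    simp only [h0, iteratedDeriv_zero]
    exact hM p.2
  have := le_ciSup hb ((0 : Fin 1), x)
  simpa [crNorm, iteratedDeriv_zero] using this

lemma crNorm_one_const_le : crNorm 1 (fun _ : ℝ => (1:ℝ)) ≤ 1 := by
  refine Real.iSup_le (fun p => ?_) zero_le_one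
  have hlt := p.1.isLt
  have h2 : (p.1 : ℕ) = 0 ∨ (p.1 : ℕ) = 1 := by omega
  rcases h2 with h | h <;> rw [h]
  · rw [iteratedDeriv_zero]; simp
  · rw [iteratedDeriv_one, deriv_const']; simp

lemma iterLin_contPer {Ω : Type*} (σ : Ω → Ω) (Lop : Ω → (ℝ → ℝ) →ₗ[ℝ] (ℝ → ℝ))
    (hL : ∀ ω g, Continuous g → Periodic g 1 → Continuous (Lop ω g) ∧ Periodic (Lop ω g) 1) :
    ∀ n (ω : Ω) (g : ℝ → ℝ), Continuous g → Periodic g 1 →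
      Continuous (iterLin σ Lop n ω g) ∧ Periodic (iterLin σ Lop n ω g) 1 := by
  intro n
  induction n with
  | zero => intro ω g hc hp; exact ⟨hc, hp⟩
  | succ n ih =>
    intro ω g hc hp
    have h1 := hL ω g hc hp
    have h2 := ih (σ ω) (Lop ω g) h1.1 h1.2
    simpa [iterLin] using h2

theorem stmt_12
    {Ω : Type*} [MeasurableSpace Ω] (ℙ : Measure Ω) [IsProbabilityMeasure ℙ]
    (σ σinv : Ω → Ω)
    (hσ : MeasurePreserving σ ℙ ℙ) (hσinv : Measurable σinv)
    (hinv₁ : Function.LeftInverse σinv σ) (hinv₂ : Function.RightInverse σinv σ)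
    (I : Set ℝ) (hIopen : IsOpen I) (hIsub : I ⊆ Set.Ioo (-1) 1) (hI0 : (0 : ℝ) ∈ I)
    -- the operators L_{ω,ε}, bounded (linear) on C⁰(𝕋)
    (L : ℝ → Ω → (ℝ → ℝ) →ₗ[ℝ] (ℝ → ℝ))
    (hLpres : ∀ ε ∈ I, ∀ ω : Ω, ∀ g : ℝ → ℝ, Continuous g → Periodic g 1 →
      Continuous (L ε ω g) ∧ Periodic (L ε ω g) 1)
    (hLbdd : ∀ ε ∈ I, ∀ ω : Ω, ∃ Kb : ℝ, ∀ g : ℝ → ℝ, Continuous g → Periodic g 1 →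
      crNorm 0 (L ε ω g) ≤ Kb * crNorm 0 g)
    -- the families h_{ω,ε} ⊆ C⁰(𝕋)
    (h : ℝ → Ω → ℝ → ℝ)
    (hhC0 : ∀ ε ∈ I, ∀ ω : Ω, Continuous (h ε ω) ∧ Periodic (h ε ω) 1)
    (β p₁ : ℝ) (hβ : 1 < β) (hp₁ : 1 ≤ p₁)
    (C1 : Ω → ℝ) (hC1 : MemLpRV ℙ p₁ C1)
    (hmain : ∀ᵐ ω ∂ℙ, ∀ ε ∈ I, ∀ n : ℕ, 1 ≤ n →
      ∀ g : ℝ → ℝ, ContDiff ℝ 1 g → Periodic g 1 →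
        crNorm 0 (fun x =>
            iterLin σ (L ε) n ω g x - (∫ t in Set.Ioc (0 : ℝ) 1, g t) * h ε (σ^[n] ω) x) ≤
          C1 ω * (n : ℝ) ^ (-β) * crNorm 1 g)
    (E : Ω → ℝ)
    (hEbd : ∀ᵐ ω ∂ℙ, ∀ ε ∈ I, crNorm 0 (L ε ω (fun _ => 1)) ≤ E ω) :
    ∃ B₀ : Ω → ℝ, MemLpRV ℙ p₁ B₀ ∧
      ∀ᵐ ω ∂ℙ,
        (∀ n : ℕ, 1 ≤ n → ∀ ε ∈ I,
          crNorm 0 (iterLin σ (L ε) n (σinv^[n] ω) (fun _ => 1)) ≤ B₀ ω + E (σinv ω)) ∧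
        (∀ ε ∈ I, crNorm 0 (h ε ω) ≤ B₀ ω + E (σinv ω)) := by
  classical
  have hp₁pos : (0:ℝ) < p₁ := lt_of_lt_of_le one_pos hp₁
  -- σinv is measure preserving
  have hσinvMP : MeasurePreserving σinv ℙ ℙ := by
    refine ⟨hσinv, ?_⟩
    ext s hs
    rw [Measure.map_apply hσinv hs]
    have h1 : σ ⁻¹' (σinv ⁻¹' s) = s := by
      ext x; simp [hinv₁ x]
    calc ℙ (σinv ⁻¹' s)
        = ℙ (σ ⁻¹' (σinv ⁻¹' s)) := by
          rw [← Measure.map_apply hσ.measurable (hσinv hs), hσ.map_eq]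
      _ = ℙ s := by rw [h1]
  have hIterMP : ∀ n : ℕ, MeasurePreserving (σinv^[n]) ℙ ℙ := fun n => hσinvMP.iterate n
  -- basic objects
  set q : ℝ := β * p₁ with hqdef
  have hq1 : 1 < q := by nlinarith
  set v : Ω → ℝ := fun ω => C1 ω ^ p₁ with hvdef
  have hvmeas : Measurable v := (Real.continuous_rpow_const hp₁pos.le).measurable.comp hC1.1
  have hvnn : ∀ ω, 0 ≤ v ω := fun ω => Real.rpow_nonneg (hC1.2.1 ω) _
  have hvint : Integrable v ℙ := hC1.2.2
  have hcnn : ∀ m : ℕ, 0 ≤ ((m:ℝ)+1) ^ (-q) := fun m => Real.rpow_nonneg (by positivity) _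
  have hcsum : Summable (fun m : ℕ => ((m:ℝ)+1) ^ (-q)) := by
    have h1 := (Real.summable_nat_rpow (p := -q)).2 (by linarith)
    have h2 := (summable_nat_add_iff 1).2 h1
    refine h2.congr fun m => ?_
    push_cast
    ring_nf
  set u : ℕ → Ω → ℝ := fun m ω => v (σinv^[m+1] ω) * ((m:ℝ)+1) ^ (-q) with hudef
  have humeas : ∀ m, Measurable (u m) := fun m =>
    (hvmeas.comp (hσinv.iterate (m+1))).mul_const _
  have hunn : ∀ m ω, 0 ≤ u m ω := fun m ω => mul_nonneg (hvnn _) (hcnn m)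
  set Φ : Ω → ℝ≥0∞ := fun ω => ∑' m, ENNReal.ofReal (u m ω) with hΦdef
  have hΦmeas : Measurable Φ := Measurable.ennreal_tsum fun m => (humeas m).ennreal_ofReal
  have hIv : ∫⁻ ω, ENNReal.ofReal (v ω) ∂ℙ < ⊤ := by
    have h1 := hvint.hasFiniteIntegral
    calc ∫⁻ ω, ENNReal.ofReal (v ω) ∂ℙ
        = ∫⁻ ω, (‖v ω‖₊ : ℝ≥0∞) ∂ℙ := by
          refine lintegral_congr fun ω => ?_
          rw [← enorm_eq_nnnorm, Real.enorm_eq_ofReal (hvnn ω)]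
      _ < ⊤ := h1
  have hΦlint : ∫⁻ ω, Φ ω ∂ℙ < ⊤ := by
    have hrw : ∫⁻ ω, Φ ω ∂ℙ = ∑' m, ∫⁻ ω, ENNReal.ofReal (u m ω) ∂ℙ :=
      lintegral_tsum fun m => ((humeas m).ennreal_ofReal).aemeasurable
    have heq : ∀ m : ℕ, ∫⁻ ω, ENNReal.ofReal (u m ω) ∂ℙ
        = ENNReal.ofReal (((m:ℝ)+1) ^ (-q)) * ∫⁻ ω, ENNReal.ofReal (v ω) ∂ℙ := by
      intro m
      have h1 : ∀ ω, ENNReal.ofReal (u m ω)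
          = ENNReal.ofReal (v (σinv^[m+1] ω)) * ENNReal.ofReal (((m:ℝ)+1) ^ (-q)) := by
        intro ω; rw [← ENNReal.ofReal_mul (hvnn _)]
      have hm1 : Measurable fun ω' => ENNReal.ofReal (v (σinv^[m+1] ω')) :=
        (hvmeas.comp (hσinv.iterate (m+1))).ennreal_ofReal
      calc ∫⁻ ω', ENNReal.ofReal (u m ω') ∂ℙ
          = ∫⁻ ω', ENNReal.ofReal (v (σinv^[m+1] ω')) * ENNReal.ofReal (((m:ℝ)+1) ^ (-q)) ∂ℙ := by
            simp_rw [h1]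
        _ = (∫⁻ ω', ENNReal.ofReal (v (σinv^[m+1] ω')) ∂ℙ) * ENNReal.ofReal (((m:ℝ)+1) ^ (-q)) :=
            lintegral_mul_const _ hm1
        _ = (∫⁻ ω', ENNReal.ofReal (v ω') ∂ℙ) * ENNReal.ofReal (((m:ℝ)+1) ^ (-q)) := by
            rw [show (∫⁻ ω', ENNReal.ofReal (v (σinv^[m+1] ω')) ∂ℙ)
                = ∫⁻ ω', ENNReal.ofReal (v ω') ∂ℙ from
              (hIterMP (m+1)).lintegral_comp hvmeas.ennreal_ofReal]
        _ = ENNReal.ofReal (((m:ℝ)+1) ^ (-q)) * ∫⁻ ω', ENNReal.ofReal (v ω') ∂ℙ :=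
            mul_comm _ _
    rw [hrw]
    simp_rw [heq]
    rw [ENNReal.tsum_mul_right, ← ENNReal.ofReal_tsum_of_nonneg hcnn hcsum]
    exact ENNReal.mul_lt_top ENNReal.ofReal_lt_top hIv
  set F : Ω → ℝ := fun ω => (Φ ω).toReal with hFdef
  have hFmeas : Measurable F := hΦmeas.ennreal_toReal
  have hFnn : ∀ ω, 0 ≤ F ω := fun _ => ENNReal.toReal_nonneg
  have hFint : Integrable F ℙ := by
    refine ⟨hFmeas.aestronglyMeasurable, ?_⟩
    show ∫⁻ ω, (‖F ω‖₊ : ℝ≥0∞) ∂ℙ < ⊤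
    refine lt_of_le_of_lt ?_ hΦlint
    calc ∫⁻ ω, (‖F ω‖₊ : ℝ≥0∞) ∂ℙ
        = ∫⁻ ω, ENNReal.ofReal (F ω) ∂ℙ := by
          refine lintegral_congr fun ω => ?_
          rw [← enorm_eq_nnnorm, Real.enorm_eq_ofReal (hFnn ω)]
      _ ≤ ∫⁻ ω, Φ ω ∂ℙ := lintegral_mono fun ω => ENNReal.ofReal_toReal_le
  set G : Ω → ℝ := fun ω => v (σinv ω) + F ω with hGdef
  have hGmeas : Measurable G := (hvmeas.comp hσinv).add hFmeas
  have hGnn : ∀ ω, 0 ≤ G ω := fun ω => add_nonneg (hvnn _) (hFnn ω)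
  have hGint : Integrable G ℙ :=
    ((hσinvMP.integrable_comp hvint.aestronglyMeasurable).2 hvint).add hFint
  set B₀ : Ω → ℝ := fun ω => 2 * G ω ^ (1/p₁) with hBdef
  have hBnn : ∀ ω, 0 ≤ B₀ ω := fun ω =>
    mul_nonneg (by norm_num) (Real.rpow_nonneg (hGnn ω) _)
  refine ⟨B₀, ⟨?_, hBnn, ?_⟩, ?_⟩
  · exact ((Real.continuous_rpow_const (by positivity)).measurable.comp hGmeas).const_mul 2
  · have hBpow : (fun ω => B₀ ω ^ p₁) = fun ω => (2:ℝ) ^ p₁ * G ω := by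
      funext ω
      show ((2:ℝ) * G ω ^ (1/p₁)) ^ p₁ = (2:ℝ) ^ p₁ * G ω
      rw [Real.mul_rpow (by norm_num) (Real.rpow_nonneg (hGnn ω) _),
        ← Real.rpow_mul (hGnn ω), one_div, inv_mul_cancel₀ (ne_of_gt hp₁pos), Real.rpow_one]
    rw [hBpow]
    exact hGint.const_mul _
  -- the a.e. statement
  have hmainIter : ∀ᵐ ω ∂ℙ, ∀ m : ℕ,
      ∀ ε ∈ I, ∀ n : ℕ, 1 ≤ n → ∀ g : ℝ → ℝ, ContDiff ℝ 1 g → Periodic g 1 →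
        crNorm 0 (fun x => iterLin σ (L ε) n (σinv^[m] ω) g x -
          (∫ t in Set.Ioc (0 : ℝ) 1, g t) * h ε (σ^[n] (σinv^[m] ω)) x) ≤
          C1 (σinv^[m] ω) * (n : ℝ) ^ (-β) * crNorm 1 g := by
    rw [ae_all_iff]
    intro m
    exact (hIterMP m).quasiMeasurePreserving.ae hmain
  have hEIter : ∀ᵐ ω ∂ℙ, ∀ ε ∈ I, crNorm 0 (L ε (σinv ω) (fun _ => 1)) ≤ E (σinv ω) :=
    hσinvMP.quasiMeasurePreserving.ae hEbd
  have hΦae : ∀ᵐ ω ∂ℙ, Φ ω ≠ ⊤ := by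
    filter_upwards [ae_lt_top hΦmeas hΦlint.ne] with ω hω using hω.ne
  filter_upwards [hmainIter, hEIter, hΦae] with ω hm hE2 hΦω
  -- pointwise facts at ω
  have honeC : Continuous (fun _ : ℝ => (1:ℝ)) := continuous_const
  have honeP : Periodic (fun _ : ℝ => (1:ℝ)) 1 := fun _ => rfl
  have hint1 : (∫ t in Set.Ioc (0:ℝ) 1, (1:ℝ)) = 1 := by simp
  have hσn : ∀ n : ℕ, σ^[n] (σinv^[n] ω) = ω := fun n => (hinv₂.iterate n) ω
  have hEnn : 0 ≤ E (σinv ω) := (crNorm_nonneg 0 _).trans (hE2 0 hI0)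
  have key : ∀ ε ∈ I, ∀ n : ℕ, 1 ≤ n →
      crNorm 0 (fun x => iterLin σ (L ε) n (σinv^[n] ω) (fun _ => 1) x - h ε ω x) ≤
        C1 (σinv^[n] ω) * (n:ℝ) ^ (-β) := by
    intro ε hε n hn
    have h0 := hm n ε hε n hn (fun _ => 1) contDiff_const honeP
    rw [hσn n, hint1] at h0
    simp only [one_mul] at h0
    have hnn : 0 ≤ C1 (σinv^[n] ω) * (n:ℝ) ^ (-β) :=
      mul_nonneg (hC1.2.1 _) (Real.rpow_nonneg (Nat.cast_nonneg n) _)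
    refine h0.trans ?_
    calc C1 (σinv^[n] ω) * (n:ℝ) ^ (-β) * crNorm 1 (fun _ => 1)
        ≤ C1 (σinv^[n] ω) * (n:ℝ) ^ (-β) * 1 := by
          exact mul_le_mul_of_nonneg_left crNorm_one_const_le hnn
      _ = C1 (σinv^[n] ω) * (n:ℝ) ^ (-β) := mul_one _
  -- bound on h
  have hhbd : ∀ ε ∈ I, crNorm 0 (h ε ω) ≤ E (σinv ω) + C1 (σinv ω) := by
    intro ε hε
    have hL1 := hLpres ε hε (σinv ω) (fun _ => 1) honeC honeP
    have hkey := key ε hε 1 le_rfl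
    simp only [Function.iterate_one, Nat.cast_one, Real.one_rpow, mul_one] at hkey
    have hiter1 : ∀ x, iterLin σ (L ε) 1 (σinv ω) (fun _ => (1:ℝ)) x
        = L ε (σinv ω) (fun _ => (1:ℝ)) x := by
      intro x; simp [iterLin]
    have hfe : (fun x => iterLin σ (L ε) 1 (σinv ω) (fun _ => (1:ℝ)) x - h ε ω x)
        = fun x => L ε (σinv ω) (fun _ => (1:ℝ)) x - h ε ω x :=
      funext fun x => by rw [hiter1 x]
    rw [hfe] at hkey
    have hdC : Continuous (fun x => L ε (σinv ω) (fun _ => (1:ℝ)) x - h ε ω x) :=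
      hL1.1.sub (hhC0 ε hε ω).1
    have hdP : Periodic (fun x => L ε (σinv ω) (fun _ => (1:ℝ)) x - h ε ω x) 1 :=
      hL1.2.sub (hhC0 ε hε ω).2
    refine crNorm_zero_le (add_nonneg hEnn (hC1.2.1 _)) (fun x => ?_)
    have e1 : h ε ω x = L ε (σinv ω) (fun _ => (1:ℝ)) x -
        (L ε (σinv ω) (fun _ => (1:ℝ)) x - h ε ω x) := by ring
    rw [e1]
    calc |L ε (σinv ω) (fun _ => (1:ℝ)) x -
          (L ε (σinv ω) (fun _ => (1:ℝ)) x - h ε ω x)|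
        ≤ |L ε (σinv ω) (fun _ => (1:ℝ)) x| +
          |L ε (σinv ω) (fun _ => (1:ℝ)) x - h ε ω x| := abs_sub _ _
      _ ≤ E (σinv ω) + C1 (σinv ω) := by
          refine add_le_add ?_ ?_
          · exact (abs_le_crNorm_zero hL1.1 hL1.2 x).trans (hE2 ε hε)
          · exact (abs_le_crNorm_zero hdC hdP x).trans hkey
  -- the combined bound C1(σinv ω) + C1(σinv^[n] ω) n^{-β} ≤ B₀ ω
  have hab : ∀ n : ℕ, 1 ≤ n →
      C1 (σinv ω) + C1 (σinv^[n] ω) * (n:ℝ) ^ (-β) ≤ B₀ ω := by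
    intro n hn
    obtain ⟨m, rfl⟩ : ∃ m, n = m + 1 := ⟨n - 1, by omega⟩
    have hFge : u m ω ≤ F ω := by
      have h1 : ENNReal.ofReal (u m ω) ≤ Φ ω := ENNReal.le_tsum m
      have h2 := ENNReal.toReal_mono hΦω h1
      rwa [ENNReal.toReal_ofReal (hunn m ω)] at h2
    have root_le : ∀ b : ℝ, 0 ≤ b → b ^ p₁ ≤ G ω → b ≤ G ω ^ (1/p₁) := by
      intro b hb hbp
      calc b = (b ^ p₁) ^ (1/p₁) := by
            rw [← Real.rpow_mul hb, mul_one_div, div_self (ne_of_gt hp₁pos), Real.rpow_one]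
        _ ≤ G ω ^ (1/p₁) :=
            Real.rpow_le_rpow (Real.rpow_nonneg hb _) hbp (by positivity)
    have ha : C1 (σinv ω) ≤ G ω ^ (1/p₁) := by
      refine root_le _ (hC1.2.1 _) ?_
      exact le_add_of_nonneg_right (hFnn ω)
    have hb : C1 (σinv^[m+1] ω) * ((m+1:ℕ):ℝ) ^ (-β) ≤ G ω ^ (1/p₁) := by
      refine root_le _ (mul_nonneg (hC1.2.1 _) (Real.rpow_nonneg (Nat.cast_nonneg _) _)) ?_
      have hbp : (C1 (σinv^[m+1] ω) * ((m+1:ℕ):ℝ) ^ (-β)) ^ p₁ = u m ω := by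
        rw [Real.mul_rpow (hC1.2.1 _) (Real.rpow_nonneg (Nat.cast_nonneg _) _),
          ← Real.rpow_mul (Nat.cast_nonneg _)]
        show C1 (σinv^[m+1] ω) ^ p₁ * ((m+1:ℕ):ℝ) ^ (-β * p₁)
          = C1 (σinv^[m+1] ω) ^ p₁ * ((m:ℝ)+1) ^ (-q)
        rw [hqdef]
        push_cast
        ring_nf
      rw [hbp]
      exact hFge.trans (le_add_of_nonneg_left (hvnn _))
    calc C1 (σinv ω) + C1 (σinv^[m+1] ω) * ((m+1:ℕ):ℝ) ^ (-β)
        ≤ G ω ^ (1/p₁) + G ω ^ (1/p₁) := add_le_add ha hb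
      _ = B₀ ω := by rw [hBdef]; ring
  constructor
  · -- main bound
    intro n hn ε hε
    have hkey := key ε hε n hn
    have hICP := iterLin_contPer σ (L ε) (fun ω' g hc hp => hLpres ε hε ω' g hc hp)
      n (σinv^[n] ω) (fun _ => 1) honeC honeP
    have hdC : Continuous
        (fun x => iterLin σ (L ε) n (σinv^[n] ω) (fun _ => (1:ℝ)) x - h ε ω x) :=
      hICP.1.sub (hhC0 ε hε ω).1
    have hdP : Periodic
        (fun x => iterLin σ (L ε) n (σinv^[n] ω) (fun _ => (1:ℝ)) x - h ε ω x) 1 :=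
      hICP.2.sub (hhC0 ε hε ω).2
    have hstep : crNorm 0 (iterLin σ (L ε) n (σinv^[n] ω) (fun _ => 1)) ≤
        E (σinv ω) + (C1 (σinv ω) + C1 (σinv^[n] ω) * (n:ℝ) ^ (-β)) := by
      have hnn0 : 0 ≤ C1 (σinv^[n] ω) * (n:ℝ) ^ (-β) :=
        mul_nonneg (hC1.2.1 _) (Real.rpow_nonneg (Nat.cast_nonneg n) _)
      refine crNorm_zero_le (add_nonneg hEnn (add_nonneg (hC1.2.1 _) hnn0)) (fun x => ?_)
      have e1 : iterLin σ (L ε) n (σinv^[n] ω) (fun _ => (1:ℝ)) x =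
          (iterLin σ (L ε) n (σinv^[n] ω) (fun _ => (1:ℝ)) x - h ε ω x) + h ε ω x := by ring
      rw [e1]
      calc |(iterLin σ (L ε) n (σinv^[n] ω) (fun _ => (1:ℝ)) x - h ε ω x) + h ε ω x|
          ≤ |iterLin σ (L ε) n (σinv^[n] ω) (fun _ => (1:ℝ)) x - h ε ω x| + |h ε ω x| :=
            abs_add_le _ _
        _ ≤ C1 (σinv^[n] ω) * (n:ℝ) ^ (-β) + (E (σinv ω) + C1 (σinv ω)) :=
            add_le_add ((abs_le_crNorm_zero hdC hdP x).trans hkey)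
              ((abs_le_crNorm_zero (hhC0 ε hε ω).1 (hhC0 ε hε ω).2 x).trans (hhbd ε hε))
        _ = E (σinv ω) + (C1 (σinv ω) + C1 (σinv^[n] ω) * (n:ℝ) ^ (-β)) := by ring
    have hab' := hab n hn
    linarith
  · intro ε hε
    have h1 := hab 1 le_rfl
    have h2 : 0 ≤ C1 (σinv^[1] ω) * ((1:ℕ):ℝ) ^ (-β) :=
      mul_nonneg (hC1.2.1 _) (Real.rpow_nonneg (by norm_num) _)
    have := hhbd ε hε
    linarith
end
end

section
/- For each ω ∈ Ω and ε ∈ I let T_{ω,ε} : 𝕋 → 𝕋 be a C² covering map with min|T′_{ω,ε}| ≥ γ_ω > 0, write T_ω := T_{ω,0}, and let L_{ω,ε} denote the transfer operator of T_{ω,ε} with respect to Lebesgue measure. Suppose there is a random variable q(ω) such that for all ε ∈ I: d_{C¹}(T_{ω,ε}, T_ω) ≤ q(ω)·|ε|, and for every x ∈ 𝕋 the preimage sets can be enumerated as T_{ω,ε}^{−1}{x} = {y_{ε,i,ω}(x)} and T_ω^{−1}{x} = {y_{i,ω}(x)} with sup_{x,i} d(y_{ε,i,ω}(x), y_{i,ω}(x))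 ≤ q(ω)·|ε|. Suppose also ‖L_ω 𝟙‖_∞ ≤ E(ω). Then for ℙ-a.e. ω, every g ∈ C¹(𝕋) and every ε ∈ I: ‖(L_{ω,ε} − L_ω) g‖_∞ ≤ |ε| · q̄(ω) · ‖g‖_{C¹}, where q̄(ω) := E(ω)·q(ω)·(1 + γ_ω^{−1} + γ_ω^{−1}·‖T_ω″‖_∞). -/
open MeasureTheory Function

noncomputable section

/-- MVT bound. -/
lemma aux_mvt {f : ℝ → ℝ} {C : ℝ} (hf : Differentiable ℝ f) (hC : ∀ x, |deriv f x| ≤ C)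
    (s t : ℝ) : |f s - f t| ≤ C * |s - t| := by
  have := Convex.norm_image_sub_le_of_norm_deriv_le (f := f) (s := Set.univ)
    (fun x _ => (hf x)) (fun x _ => by simpa using hC x) convex_univ (Set.mem_univ t)
    (Set.mem_univ s)
  simpa [Real.norm_eq_abs] using this

/-- derivative of an "affine-periodic" function is periodic. -/
lemma aux_deriv_periodic {f : ℝ → ℝ} {d : ℝ} (h : ∀ x, f (x + 1) = f x + d) :
    Periodic (deriv f) 1 := by
  intro x
  have h1 : (fun y => f (y + 1)) = fun y => f y + d := funext h
  calc deriv f (x + 1) = deriv (fun y => f (y + 1)) x := (deriv_comp_add_const ..).symm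
    _ = deriv f x := by rw [h1]; simp

/-- a continuous 1-periodic function is bounded. -/
lemma aux_periodic_bounded {f : ℝ → ℝ} (hf : Continuous f) (hp : Periodic f 1) :
    ∃ C, ∀ x, |f x| ≤ C := by
  obtain ⟨C, hC⟩ := (isCompact_Icc (a := (0:ℝ)) (b := 1)).exists_bound_of_continuousOn
    hf.continuousOn
  refine ⟨C, fun x => ?_⟩
  have h1 : f x = f (Int.fract x) := by
    rw [← Int.self_sub_floor]
    have := hp.sub_int_mul_eq (x := x) ⌊x⌋
    simpa using this.symm
  rw [h1]
  have := hC (Int.fract x) ⟨(Int.fract_nonneg x), le_of_lt (by simpa using Int.fract_lt_one x)⟩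
  simpa [Real.norm_eq_abs] using this

/-- transfer operator as a finite sum over the enumerated preimages. -/
lemma aux_transferOp_eq_sum (T g : ℝ → ℝ) (x : ℝ) (n : ℕ) (yy : ℕ → ℝ)
    (h1 : ∀ i < n, yy i ∈ Set.Ico (0:ℝ) 1 ∧ ∃ k : ℤ, T (yy i) = x + k)
    (h2 : ∀ i < n, ∀ j < n, i ≠ j → yy i ≠ yy j)
    (h3 : ∀ z ∈ Set.Ico (0:ℝ) 1, (∃ k : ℤ, T z = x + k) → ∃ i < n, yy i = z) :
    transferOp T g x = ∑ i : Fin n, g (yy i) / |deriv T (yy i)| := by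
  set P := {y : ℝ // y ∈ Set.Ico (0:ℝ) 1 ∧ ∃ k : ℤ, T y = x + k}
  have hbij : Function.Bijective (fun i : Fin n => (⟨yy i, h1 i i.2⟩ : P)) := by
    constructor
    · intro i j hij
      by_contra hne
      exact h2 i i.2 j j.2 (fun h => hne (Fin.ext h)) (congrArg Subtype.val hij)
    · rintro ⟨z, hz1, hz2⟩
      obtain ⟨i, hi, hiz⟩ := h3 z hz1 hz2
      exact ⟨⟨i, hi⟩, Subtype.ext hiz⟩
  have heq := Equiv.tsum_eq (Equiv.ofBijective _ hbij)
    (fun y : P => g (y : ℝ) / |deriv T (y : ℝ)|)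
  rw [transferOp, ← heq, tsum_fintype]
  rfl

/-- the elementary per-preimage estimate. -/
lemma aux_term_bound {ga gb A B γ S qe Mg : ℝ}
    (hγ : 0 < γ) (hA : γ ≤ |A|) (hB : γ ≤ |B|)
    (hqe : 0 ≤ qe) (hMg : 0 ≤ Mg) (hS : 0 ≤ S)
    (hga : |ga| ≤ Mg) (hgab : |ga - gb| ≤ Mg * qe)
    (hAB : |B - A| ≤ (1 + S) * qe) :
    abs (ga / |A| - gb / |B|) ≤ (1 / |B|) * (qe * (Mg * (1 + γ⁻¹ + γ⁻¹ * S))) := by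
  have hA0 : 0 < |A| := lt_of_lt_of_le hγ hA
  have hB0 : 0 < |B| := lt_of_lt_of_le hγ hB
  have h1 : ga / |A| - gb / |B| = ((ga - gb) + ga * ((|B| - |A|) / |A|)) / |B| := by
    field_simp
    ring
  rw [h1, abs_div, abs_of_pos hB0, one_div, inv_mul_eq_div]
  have h2 : abs (|B| - |A|) ≤ (1 + S) * qe := (abs_abs_sub_abs_le_abs_sub B A).trans hAB
  have h3 : |(ga - gb) + ga * ((|B| - |A|) / |A|)| ≤ Mg * qe + Mg * (((1 + S) * qe) / γ) := by
    refine (abs_add_le _ _).trans (add_le_add hgab ?_)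
    rw [abs_mul, abs_div, abs_of_pos hA0]
    have h4 : abs (|B| - |A|) / |A| ≤ ((1 + S) * qe) / γ :=
      div_le_div₀ (by positivity) h2 hγ hA
    exact mul_le_mul hga h4 (by positivity) hMg
  have h5 : Mg * qe + Mg * (((1 + S) * qe) / γ) = qe * (Mg * (1 + γ⁻¹ + γ⁻¹ * S)) := by
    field_simp
    ring
  calc |(ga - gb) + ga * ((|B| - |A|) / |A|)| / |B|
      ≤ (Mg * qe + Mg * (((1 + S) * qe) / γ)) / |B| := by gcongr
    _ = qe * (Mg * (1 + γ⁻¹ + γ⁻¹ * S)) / |B| := by rw [h5]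

theorem stmt_13
    {Ω : Type*} [MeasurableSpace Ω] (ℙ : Measure Ω) [IsProbabilityMeasure ℙ]
    (I : Set ℝ) (hIopen : IsOpen I) (hIsub : I ⊆ Set.Ioo (-1) 1) (hI0 : (0 : ℝ) ∈ I)
    -- lifts of the C² covering maps T_{ω,ε} : 𝕋 → 𝕋, with min |T'| ≥ γ_ω > 0
    (T : Ω → ℝ → ℝ → ℝ) (γ : Ω → ℝ) (hγ : ∀ ω, 0 < γ ω)
    (hT : ∀ ω, ∀ ε ∈ I, ContDiff ℝ 2 (T ω ε) ∧
      (∃ d : ℤ, ∀ x, T ω ε (x + 1) = T ω ε x + d) ∧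
      ∀ x, γ ω ≤ |deriv (T ω ε) x|)
    -- d_{C¹}(T_{ω,ε}, T_{ω,0}) ≤ q(ω)|ε|
    (q : Ω → ℝ)
    (hdC1 : ∀ ω, ∀ ε ∈ I, ∀ x : ℝ,
      |T ω ε x - T ω 0 x| ≤ q ω * |ε| ∧
      |deriv (T ω ε) x - deriv (T ω 0) x| ≤ q ω * |ε|)
    -- enumeration and pairing of the preimages
    (deg : Ω → ℕ) (y : Ω → ℝ → ℝ → ℕ → ℝ)
    (henum : ∀ ω, ∀ ε ∈ I, ∀ x : ℝ,
      (∀ i < deg ω, y ω ε x i ∈ Set.Ico (0 : ℝ) 1 ∧ ∃ k : ℤ, T ω ε (y ω ε x i) = x + k) ∧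
      (∀ i < deg ω, ∀ j < deg ω, i ≠ j → y ω ε x i ≠ y ω ε x j) ∧
      (∀ z ∈ Set.Ico (0 : ℝ) 1, (∃ k : ℤ, T ω ε z = x + k) → ∃ i < deg ω, y ω ε x i = z))
    (hpair : ∀ ω, ∀ ε ∈ I, ∀ x : ℝ, ∀ i < deg ω,
      |y ω ε x i - y ω 0 x i| ≤ q ω * |ε|)
    -- ‖L_{ω,0} 𝟙‖_∞ ≤ E(ω)
    (E : Ω → ℝ)
    (hE : ∀ ω, crNorm 0 (transferOp (T ω 0) (fun _ => 1)) ≤ E ω) :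
    ∀ᵐ ω ∂ℙ, ∀ g : ℝ → ℝ, ContDiff ℝ 1 g → Periodic g 1 → ∀ ε ∈ I,
      crNorm 0 (fun x => transferOp (T ω ε) g x - transferOp (T ω 0) g x) ≤
        |ε| *
          (E ω * q ω *
            (1 + (γ ω)⁻¹ + (γ ω)⁻¹ * ⨆ x : ℝ, |iteratedDeriv 2 (T ω 0) x|)) *
          crNorm 1 g := by
  refine MeasureTheory.ae_of_all _ fun ω g hg hper ε hε => ?_
  obtain ⟨hT0c, ⟨d0, hd0⟩, hT0γ⟩ := hT ω 0 hI0
  obtain ⟨hTεc, -, hTεγ⟩ := hT ω ε hε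
  have hγω := hγ ω
  have hγinv0 : (0:ℝ) ≤ (γ ω)⁻¹ := by positivity
  -- q ω ≥ 0
  obtain ⟨δ, hδ, hball⟩ := Metric.isOpen_iff.mp hIopen 0 hI0
  have hδI : (δ/2) ∈ I := hball (by
    simp only [Metric.mem_ball, Real.dist_eq, sub_zero]
    rw [abs_of_pos (by linarith)]; linarith)
  have hq0 : 0 ≤ q ω := by
    have h := (hdC1 ω (δ/2) hδI 0).1
    have h2 : (0:ℝ) ≤ q ω * |δ/2| := le_trans (abs_nonneg _) h
    have h3 : (0:ℝ) < |δ/2| := by rw [abs_of_pos (by linarith)]; linarith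
    nlinarith
  have hqe0 : 0 ≤ q ω * |ε| := mul_nonneg hq0 (abs_nonneg ε)
  -- boundedness of g and deriv g
  have hgd : Differentiable ℝ g := hg.differentiable one_ne_zero
  have hdg_per : Periodic (deriv g) 1 :=
    aux_deriv_periodic (d := 0) (fun x => by rw [hper x, add_zero])
  obtain ⟨Cg, hCg⟩ := aux_periodic_bounded hg.continuous hper
  obtain ⟨Cg', hCg'⟩ := aux_periodic_bounded (hg.continuous_deriv le_rfl) hdg_per
  set Mg := crNorm 1 g with hMgdef
  have hbddg : BddAbove (Set.range fun p : Fin (1+1) × ℝ => |iteratedDeriv (p.1 : ℕ) g p.2|) := by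
    refine ⟨max Cg Cg', ?_⟩
    rintro z ⟨⟨i, x⟩, rfl⟩
    dsimp only
    have hi : (i : ℕ) = 0 ∨ (i : ℕ) = 1 := by omega
    rcases hi with hi | hi <;> rw [hi]
    · rw [iteratedDeriv_zero]; exact le_max_of_le_left (hCg x)
    · rw [iteratedDeriv_one]; exact le_max_of_le_right (hCg' x)
  have hMg_g : ∀ x, |g x| ≤ Mg := by
    intro x
    have h := le_ciSup hbddg ((0 : Fin (1+1)), x)
    simp only [Fin.val_zero, iteratedDeriv_zero] at h
    exact h
  have hMg_dg : ∀ x, |deriv g x| ≤ Mg := by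
    intro x
    have h := le_ciSup hbddg ((1 : Fin (1+1)), x)
    simp only [Fin.val_one, iteratedDeriv_one] at h
    exact h
  have hMg0 : 0 ≤ Mg := le_trans (abs_nonneg _) (hMg_g 0)
  -- second derivative of T ω 0
  set T0 := T ω 0 with hT0def
  have hT0c' : ContDiff ℝ ((1:WithTop ℕ∞) + 1) T0 := by
    rw [one_add_one_eq_two]; exact hT0c
  obtain ⟨hT0d, -, hT0d1⟩ := contDiff_succ_iff_deriv.mp hT0c'
  have hdT0d : Differentiable ℝ (deriv T0) := hT0d1.differentiable one_ne_zero
  have hiter2 : iteratedDeriv 2 T0 = deriv (deriv T0) := by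
    rw [iteratedDeriv_succ, iteratedDeriv_one]
  have hdd_cont : Continuous (deriv (deriv T0)) := hT0d1.continuous_deriv le_rfl
  have hdT0_per : Periodic (deriv T0) 1 := aux_deriv_periodic (d := (d0:ℝ)) hd0
  have hdd_per : Periodic (deriv (deriv T0)) 1 :=
    aux_deriv_periodic (d := 0) (fun x => by rw [hdT0_per x, add_zero])
  obtain ⟨CS, hCS⟩ := aux_periodic_bounded hdd_cont hdd_per
  set S := ⨆ x : ℝ, |iteratedDeriv 2 T0 x| with hSdef
  have hbddS : BddAbove (Set.range fun x : ℝ => |iteratedDeriv 2 T0 x|) :=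
    ⟨CS, by rintro z ⟨x, rfl⟩; dsimp only; rw [hiter2]; exact hCS x⟩
  have hS_le : ∀ x, |iteratedDeriv 2 T0 x| ≤ S := fun x => le_ciSup hbddS x
  have hS0 : 0 ≤ S := Real.iSup_nonneg fun x => abs_nonneg _
  -- finite-sum representation
  set n := deg ω with hndef
  have hrep : ∀ ε' ∈ I, ∀ (g' : ℝ → ℝ) (x : ℝ), transferOp (T ω ε') g' x =
      ∑ i : Fin n, g' (y ω ε' x i) / |deriv (T ω ε') (y ω ε' x i)| := by
    intro ε' hε' g' x
    obtain ⟨h1, h2, h3⟩ := henum ω ε' hε' x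
    exact aux_transferOp_eq_sum _ _ _ _ _ h1 h2 h3
  -- the E ω bound
  have hL1 : ∀ x : ℝ, transferOp T0 (fun _ => 1) x =
      ∑ i : Fin n, 1 / |deriv T0 (y ω 0 x i)| := fun x => hrep 0 hI0 _ x
  have hL1bdd : BddAbove (Set.range fun p : Fin (0+1) × ℝ =>
      |iteratedDeriv (p.1 : ℕ) (transferOp T0 fun _ => 1) p.2|) := by
    refine ⟨n * (γ ω)⁻¹, ?_⟩
    rintro z ⟨⟨i, x⟩, rfl⟩
    dsimp only
    have hi : (i : ℕ) = 0 := Nat.lt_one_iff.mp i.isLt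
    rw [hi, iteratedDeriv_zero, hL1 x]
    refine (Finset.abs_sum_le_sum_abs _ _).trans ?_
    have hbd : ∀ j : Fin n, abs (1 / |deriv T0 (y ω 0 x j)|) ≤ (γ ω)⁻¹ := by
      intro j
      have hj := hT0γ (y ω 0 x j)
      rw [abs_of_nonneg (by positivity), one_div]
      exact inv_anti₀ hγω hj
    calc ∑ j : Fin n, abs (1 / |deriv T0 (y ω 0 x j)|) ≤ ∑ _j : Fin n, (γ ω)⁻¹ :=
          Finset.sum_le_sum (fun j _ => hbd j)
      _ = n * (γ ω)⁻¹ := by simp [Finset.sum_const, mul_comm]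
  have hE0 : ∀ x : ℝ, (∑ i : Fin n, 1 / |deriv T0 (y ω 0 x i)|) ≤ E ω := by
    intro x
    have h1 : |transferOp T0 (fun _ => 1) x| ≤ crNorm 0 (transferOp T0 fun _ => 1) := by
      have h := le_ciSup hL1bdd ((0 : Fin (0+1)), x)
      simp only [Fin.val_zero, iteratedDeriv_zero] at h
      exact h
    calc (∑ i : Fin n, 1 / |deriv T0 (y ω 0 x i)|) = transferOp T0 (fun _ => 1) x :=
          (hL1 x).symm
      _ ≤ |transferOp T0 (fun _ => 1) x| := le_abs_self _
      _ ≤ crNorm 0 (transferOp T0 fun _ => 1) := h1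
      _ ≤ E ω := hE ω
  have hEnonneg : 0 ≤ E ω := by
    refine le_trans ?_ (hE0 0)
    exact Finset.sum_nonneg fun i _ => by positivity
  -- the pointwise bound
  set K := (q ω * |ε|) * (Mg * (1 + (γ ω)⁻¹ + (γ ω)⁻¹ * S)) with hKdef
  have hK0 : 0 ≤ K := by
    have h1 : (0:ℝ) ≤ (γ ω)⁻¹ * S := mul_nonneg hγinv0 hS0
    have h2 : (0:ℝ) ≤ 1 + (γ ω)⁻¹ + (γ ω)⁻¹ * S := by linarith
    exact mul_nonneg hqe0 (mul_nonneg hMg0 h2)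
  have hpoint : ∀ x : ℝ, |transferOp (T ω ε) g x - transferOp T0 g x| ≤ E ω * K := by
    intro x
    rw [hrep ε hε g x, hrep 0 hI0 g x, ← Finset.sum_sub_distrib]
    refine (Finset.abs_sum_le_sum_abs _ _).trans ?_
    have hterm : ∀ i : Fin n,
        abs (g (y ω ε x i) / |deriv (T ω ε) (y ω ε x i)| -
          g (y ω 0 x i) / |deriv T0 (y ω 0 x i)|) ≤
        (1 / |deriv T0 (y ω 0 x i)|) * K := by
      intro i
      set a := y ω ε x i with hadef
      set b := y ω 0 x i with hbdef
      have hab : |a - b| ≤ q ω * |ε| := hpair ω ε hε x i i.2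
      refine aux_term_bound hγω (hTεγ a) (hT0γ b) hqe0 hMg0 hS0 (hMg_g a) ?_ ?_
      · calc |g a - g b| ≤ Mg * |a - b| := aux_mvt hgd hMg_dg a b
          _ ≤ Mg * (q ω * |ε|) := by
            exact mul_le_mul_of_nonneg_left hab hMg0
      · have hba : |b - a| ≤ q ω * |ε| := by rw [abs_sub_comm]; exact hab
        have h1 : |deriv T0 b - deriv T0 a| ≤ S * |b - a| :=
          aux_mvt hdT0d (fun z => by rw [← hiter2]; exact hS_le z) b a
        have h2 : |deriv T0 a - deriv (T ω ε) a| ≤ q ω * |ε| := by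
          rw [abs_sub_comm]; exact (hdC1 ω ε hε a).2
        calc |deriv T0 b - deriv (T ω ε) a|
            ≤ |deriv T0 b - deriv T0 a| + |deriv T0 a - deriv (T ω ε) a| := abs_sub_le _ _ _
          _ ≤ S * |b - a| + q ω * |ε| := add_le_add h1 h2
          _ ≤ S * (q ω * |ε|) + q ω * |ε| := by
              have := mul_le_mul_of_nonneg_left hba hS0
              linarith
          _ = (1 + S) * (q ω * |ε|) := by ring
    calc ∑ i : Fin n, abs (g (y ω ε x i) / |deriv (T ω ε) (y ω ε x i)| -
            g (y ω 0 x i) / |deriv T0 (y ω 0 x i)|)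
        ≤ ∑ i : Fin n, (1 / |deriv T0 (y ω 0 x i)|) * K :=
          Finset.sum_le_sum (fun i _ => hterm i)
      _ = (∑ i : Fin n, 1 / |deriv T0 (y ω 0 x i)|) * K := by rw [← Finset.sum_mul]
      _ ≤ E ω * K := mul_le_mul_of_nonneg_right (hE0 x) hK0
  -- conclude
  have hRHS : E ω * K = |ε| * (E ω * q ω * (1 + (γ ω)⁻¹ + (γ ω)⁻¹ * S)) * Mg := by
    rw [hKdef]; ring
  rw [← hRHS]
  refine Real.iSup_le (fun p => ?_) (mul_nonneg hEnonneg hK0)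
  have hp : (p.1 : ℕ) = 0 := Nat.lt_one_iff.mp p.1.isLt
  rw [hp, iteratedDeriv_zero]
  exact hpoint p.2
end
end
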